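/- Define j₁(u,v) = 16v(vu² + 216u² - 126vu - 972u + 12v² + 405v)³/((v-27)³(4v² + 27v + 4u³ - 18vu - vu²)²) and j₂(u,v) = -256(u² - 3v)³/(v(4v² + 27v + 4u³ - 18vu - vu²)). Let β(u,v) be the involution with components u' = (v-3u)(324u²+15u²v-378uv-4uv²+243v+72v²)/((v-27)(4u³+27v-18uv-u²v+4v²)) and v' = -4(v-3u)³/(4u³+27v-18uv-u²v+4v²). Then j₂ = j₁ ∘ β as rational functions in u, v. -/

import Mathlib

set_option maxHeartbeats 1000000 in
/-- The j-invariants `j₁, j₂` of the two degree 3 elliptic subfields satisfy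
`j₂ = j₁ ∘ β`, where `β(u,v) = (u',v')` is the displayed involution; stated as
an identity of rational functions in `u, v`, valid wherever all denominators are
nonzero. -/
theorem j2_eq_j1_comp_beta {k : Type*} [Field k] [CharZero k] (u v u' v' : k)
    (hv : v ≠ 0) (hv27 : v ≠ 27)
    (hD : 4 * u ^ 3 + 27 * v - 18 * u * v - u ^ 2 * v + 4 * v ^ 2 ≠ 0)
    (hu' : u' = (v - 3 * u) *
        (324 * u ^ 2 + 15 * u ^ 2 * v - 378 * u * v - 4 * u * v ^ 2 + 243 * v + 72 * v ^ 2) /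
        ((v - 27) * (4 * u ^ 3 + 27 * v - 18 * u * v - u ^ 2 * v + 4 * v ^ 2)))
    (hv' : v' = -4 * (v - 3 * u) ^ 3 /
        (4 * u ^ 3 + 27 * v - 18 * u * v - u ^ 2 * v + 4 * v ^ 2))
    (hv27' : v' ≠ 27)
    (hD' : 4 * v' ^ 2 + 27 * v' + 4 * u' ^ 3 - 18 * v' * u' - v' * u' ^ 2 ≠ 0) :
    -256 * (u ^ 2 - 3 * v) ^ 3 /
        (v * (4 * v ^ 2 + 27 * v + 4 * u ^ 3 - 18 * v * u - v * u ^ 2)) =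
      16 * v' * (v' * u' ^ 2 + 216 * u' ^ 2 - 126 * v' * u' - 972 * u' + 12 * v' ^ 2 +
          405 * v') ^ 3 /
        ((v' - 27) ^ 3 *
          (4 * v' ^ 2 + 27 * v' + 4 * u' ^ 3 - 18 * v' * u' - v' * u' ^ 2) ^ 2) := by
  have h27 : v - 27 ≠ 0 := sub_ne_zero.mpr hv27
  -- cancellation facts for `u'` and `v'`
  have hA : u' * ((v - 27) * (4 * u ^ 3 + 27 * v - 18 * u * v - u ^ 2 * v + 4 * v ^ 2)) =
      (v - 3 * u) * (324 * u ^ 2 + 15 * u ^ 2 * v - 378 * u * v - 4 * u * v ^ 2 + 243 * v +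
        72 * v ^ 2) := by
    rw [hu']; exact div_mul_cancel₀ _ (mul_ne_zero h27 hD)
  have hB : v' * (4 * u ^ 3 + 27 * v - 18 * u * v - u ^ 2 * v + 4 * v ^ 2) =
      -4 * (v - 3 * u) ^ 3 := by
    rw [hv']; exact div_mul_cancel₀ _ hD
  -- closed form for `v' - 27`
  have h27key : v' - 27 = -v * (9 * u - 2 * v - 27) ^ 2 /
      (4 * u ^ 3 + 27 * v - 18 * u * v - u ^ 2 * v + 4 * v ^ 2) := by
    rw [hv', div_sub' hD, div_eq_div_iff hD hD]
    ring
  have ht : 9 * u - 2 * v - 27 ≠ 0 := by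
    intro h0
    have h1 : v' - 27 = 0 := by rw [h27key, h0]; ring
    exact hv27' (sub_eq_zero.mp h1)
  -- closed form for `D'`
  have key : 4 * v' ^ 2 + 27 * v' + 4 * u' ^ 3 - 18 * v' * u' - v' * u' ^ 2 =
      4 * (v - 3 * u) ^ 3 * v ^ 2 * (9 * u - 2 * v - 27) ^ 6 /
        ((v - 27) ^ 3 * (4 * u ^ 3 + 27 * v - 18 * u * v - u ^ 2 * v + 4 * v ^ 2) ^ 3) := by
    rw [eq_div_iff (mul_ne_zero (pow_ne_zero 3 h27) (pow_ne_zero 3 hD))]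
    have e : (4 * v' ^ 2 + 27 * v' + 4 * u' ^ 3 - 18 * v' * u' - v' * u' ^ 2) *
        ((v - 27) ^ 3 * (4 * u ^ 3 + 27 * v - 18 * u * v - u ^ 2 * v + 4 * v ^ 2) ^ 3) =
        4 * (v' * (4 * u ^ 3 + 27 * v - 18 * u * v - u ^ 2 * v + 4 * v ^ 2)) ^ 2 *
          ((v - 27) ^ 3 * (4 * u ^ 3 + 27 * v - 18 * u * v - u ^ 2 * v + 4 * v ^ 2))
        + 27 * (v' * (4 * u ^ 3 + 27 * v - 18 * u * v - u ^ 2 * v + 4 * v ^ 2)) *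
          ((v - 27) ^ 3 * (4 * u ^ 3 + 27 * v - 18 * u * v - u ^ 2 * v + 4 * v ^ 2) ^ 2)
        + 4 * (u' * ((v - 27) * (4 * u ^ 3 + 27 * v - 18 * u * v - u ^ 2 * v + 4 * v ^ 2))) ^ 3
        - 18 * (v' * (4 * u ^ 3 + 27 * v - 18 * u * v - u ^ 2 * v + 4 * v ^ 2)) *
          (u' * ((v - 27) * (4 * u ^ 3 + 27 * v - 18 * u * v - u ^ 2 * v + 4 * v ^ 2))) *
          ((v - 27) ^ 2 * (4 * u ^ 3 + 27 * v - 18 * u * v - u ^ 2 * v + 4 * v ^ 2))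
        - (v' * (4 * u ^ 3 + 27 * v - 18 * u * v - u ^ 2 * v + 4 * v ^ 2)) *
          (u' * ((v - 27) * (4 * u ^ 3 + 27 * v - 18 * u * v - u ^ 2 * v + 4 * v ^ 2))) ^ 2 *
          (v - 27) := by ring
    rw [e, hA, hB]
    ring
  have hw : v - 3 * u ≠ 0 := by
    intro h0
    apply hD'
    rw [key, h0]
    simp
  -- closed form for the inner cubic factor
  have Mkey : v' * u' ^ 2 + 216 * u' ^ 2 - 126 * v' * u' - 972 * u' + 12 * v' ^ 2 + 405 * v' =
      -4 * (v - 3 * u) * (9 * u - 2 * v - 27) ^ 6 * (u ^ 2 - 3 * v) * v ^ 2 /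
        ((v - 27) ^ 2 * (4 * u ^ 3 + 27 * v - 18 * u * v - u ^ 2 * v + 4 * v ^ 2) ^ 3) := by
    rw [eq_div_iff (mul_ne_zero (pow_ne_zero 2 h27) (pow_ne_zero 3 hD))]
    have e : (v' * u' ^ 2 + 216 * u' ^ 2 - 126 * v' * u' - 972 * u' + 12 * v' ^ 2 + 405 * v') *
        ((v - 27) ^ 2 * (4 * u ^ 3 + 27 * v - 18 * u * v - u ^ 2 * v + 4 * v ^ 2) ^ 3) =
        (v' * (4 * u ^ 3 + 27 * v - 18 * u * v - u ^ 2 * v + 4 * v ^ 2)) *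
          (u' * ((v - 27) * (4 * u ^ 3 + 27 * v - 18 * u * v - u ^ 2 * v + 4 * v ^ 2))) ^ 2
        + 216 * (u' * ((v - 27) * (4 * u ^ 3 + 27 * v - 18 * u * v - u ^ 2 * v + 4 * v ^ 2))) ^ 2 *
          (4 * u ^ 3 + 27 * v - 18 * u * v - u ^ 2 * v + 4 * v ^ 2)
        - 126 * (v' * (4 * u ^ 3 + 27 * v - 18 * u * v - u ^ 2 * v + 4 * v ^ 2)) *
          (u' * ((v - 27) * (4 * u ^ 3 + 27 * v - 18 * u * v - u ^ 2 * v + 4 * v ^ 2))) *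
          ((v - 27) * (4 * u ^ 3 + 27 * v - 18 * u * v - u ^ 2 * v + 4 * v ^ 2))
        - 972 * (u' * ((v - 27) * (4 * u ^ 3 + 27 * v - 18 * u * v - u ^ 2 * v + 4 * v ^ 2))) *
          ((v - 27) * (4 * u ^ 3 + 27 * v - 18 * u * v - u ^ 2 * v + 4 * v ^ 2) ^ 2)
        + 12 * (v' * (4 * u ^ 3 + 27 * v - 18 * u * v - u ^ 2 * v + 4 * v ^ 2)) ^ 2 *
          ((v - 27) ^ 2 * (4 * u ^ 3 + 27 * v - 18 * u * v - u ^ 2 * v + 4 * v ^ 2))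
        + 405 * (v' * (4 * u ^ 3 + 27 * v - 18 * u * v - u ^ 2 * v + 4 * v ^ 2)) *
          ((v - 27) ^ 2 * (4 * u ^ 3 + 27 * v - 18 * u * v - u ^ 2 * v + 4 * v ^ 2) ^ 2) := by
      ring
    rw [e, hA, hB]
    ring
  -- assemble
  rw [key, h27key, Mkey, hv']
  rw [show v * (4 * v ^ 2 + 27 * v + 4 * u ^ 3 - 18 * v * u - v * u ^ 2)
    = v * (4 * u ^ 3 + 27 * v - 18 * u * v - u ^ 2 * v + 4 * v ^ 2) by ring]
  set d : k := 4 * u ^ 3 + 27 * v - 18 * u * v - u ^ 2 * v + 4 * v ^ 2 with hd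
  set w : k := v - 3 * u with hwd
  set t : k := 9 * u - 2 * v - 27 with htd
  set e : k := v - 27 with hed
  set a : k := u ^ 2 - 3 * v with had
  clear_value d w t e a
  field_simp
  have hx : ∀ (x : k), x ≠ 0 → ∀ n : ℕ, x ^ n * x⁻¹ ^ n = 1 := fun x hx n => by
    rw [← mul_pow, mul_inv_cancel₀ hx, one_pow]
  have hM : w ^ 6 * t ^ 18 * v ^ 7 * d ^ 10 * e ^ 6 * w⁻¹ ^ 6 * t⁻¹ ^ 18 * v⁻¹ ^ 7 *
      d⁻¹ ^ 10 * e⁻¹ ^ 6 = 1 := by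
    rw [show w ^ 6 * t ^ 18 * v ^ 7 * d ^ 10 * e ^ 6 * w⁻¹ ^ 6 * t⁻¹ ^ 18 * v⁻¹ ^ 7 *
        d⁻¹ ^ 10 * e⁻¹ ^ 6 = (w ^ 6 * w⁻¹ ^ 6) * ((t ^ 18 * t⁻¹ ^ 18) * ((v ^ 7 * v⁻¹ ^ 7) *
        ((d ^ 10 * d⁻¹ ^ 10) * (e ^ 6 * e⁻¹ ^ 6)))) from by ring,
      hx w hw 6, hx t ht 18, hx v hv 7, hx d hD 10, hx e h27 6]
    norm_num
  linear_combination
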